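/- Let G be a group and L a normal subgroup of G, let H := G ×_L G = {(a₁,a₂) ∈ G × G : a₁a₂⁻¹ ∈ L}, and let [H,H] denote its commutator subgroup. Then the groups (G ⧸ [G,G]) × (L ⧸ ⁅G,L⁆) and H ⧸ [H,H] are isomorphic; an isomorphism is induced by the map (a,b) ↦ (a, ba)·[H,H] for a ∈ G, b ∈ L, which is a surjective homomorphism G × L → H ⧸ [H,H] with kernel [G,G] × ⁅G,L⁆. (Corollary 2.8 of the paper; stated there for nilpotent Lie groups, the group isomorphism being the content.) -/

import Mathlib

/-- The relatively independent self-product `G ×_L G` of a group `G` over a normal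
subgroup `L`, i.e. the subgroup `{(a₁, a₂) ∈ G × G : a₁ * a₂⁻¹ ∈ L}` of `G × G`. -/
def relProd {G : Type*} [Group G] (L : Subgroup G) [hN : L.Normal] : Subgroup (G × G) where
  carrier := {p : G × G | p.1 * p.2⁻¹ ∈ L}
  one_mem' := by simpa using L.one_mem
  mul_mem' := by
    rintro ⟨a₁, a₂⟩ ⟨b₁, b₂⟩ ha hb
    have h : (a₁ * b₁) * (a₂ * b₂)⁻¹ = (a₁ * (b₁ * b₂⁻¹) * a₁⁻¹) * (a₁ * a₂⁻¹) := by group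
    simp only [Set.mem_setOf_eq] at ha hb
    show a₁ * b₁ * (a₂ * b₂)⁻¹ ∈ L
    rw [h]
    exact mul_mem (hN.conj_mem _ hb a₁) ha
  inv_mem' := by
    rintro ⟨a₁, a₂⟩ ha
    simp only [Set.mem_setOf_eq] at ha
    have h : a₁⁻¹ * (a₂⁻¹)⁻¹ = a₁⁻¹ * (a₁ * a₂⁻¹)⁻¹ * (a₁⁻¹)⁻¹ := by group
    show a₁⁻¹ * (a₂⁻¹)⁻¹ ∈ L
    rw [h]
    exact hN.conj_mem _ (L.inv_mem ha) a₁⁻¹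

theorem mem_relProd {G : Type*} [Group G] {L : Subgroup G} [L.Normal] {p : G × G} :
    p ∈ relProd L ↔ p.1 * p.2⁻¹ ∈ L := Iff.rfl

open scoped commutatorElement

/-- The image of the abstract commutator subgroup of `↥(relProd L)` in `G × G` is
the commutator of `relProd L` with itself as subgroups of `G × G`. -/
theorem relProd_map_commutator {G : Type*} [Group G] (L : Subgroup G) [L.Normal] :
    Subgroup.map (relProd L).subtype (commutator ↥(relProd L)) = ⁅relProd L, relProd L⁆ := by
  rw [commutator_def, Subgroup.map_commutator, ← MonoidHom.range_eq_map,
    Subgroup.range_subtype]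

theorem mem_commutator_relProd_iff {G : Type*} [Group G] {L : Subgroup G} [L.Normal]
    {x : ↥(relProd L)} :
    x ∈ commutator ↥(relProd L) ↔ (x : G × G) ∈ ⁅relProd L, relProd L⁆ := by
  rw [← relProd_map_commutator L]
  constructor
  · exact fun h => ⟨x, h, rfl⟩
  · rintro ⟨y, hy, h⟩
    rwa [show y = x from Subtype.ext h] at hy

/-- `(1, c) ∈ ⁅H, H⁆` for every `c ∈ ⁅G, L⁆`, where `H = relProd L`. -/
theorem one_mem_relProd_commutator {G : Type*} [Group G] (L : Subgroup G) [L.Normal]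
    {c : G} (hc : c ∈ ⁅(⊤ : Subgroup G), L⁆) :
    (((1 : G), c) : G × G) ∈ ⁅relProd L, relProd L⁆ := by
  have h : ⁅(⊤ : Subgroup G), L⁆ ≤ Subgroup.comap (MonoidHom.inr G G)
      ⁅relProd L, relProd L⁆ := by
    rw [Subgroup.commutator_le]
    intro g _ l hl
    rw [Subgroup.mem_comap, MonoidHom.inr_apply]
    have h1 : ((g, g) : G × G) ∈ relProd L := mem_relProd.mpr (by simpa using L.one_mem)
    have h2 : (((1 : G), l) : G × G) ∈ relProd L := mem_relProd.mpr
      (by simpa using L.inv_mem hl)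
    have := Subgroup.commutator_mem_commutator h1 h2
    have heq : ⁅((g, g) : G × G), ((1 : G), l)⁆ = ((1 : G), ⁅g, l⁆) := by
      simp [commutatorElement_def, Prod.ext_iff]
    rwa [heq] at this
  exact h hc

/-- `(x, x) ∈ ⁅H, H⁆` for every `x ∈ [G, G]`, where `H = relProd L`. -/
theorem diag_mem_relProd_commutator {G : Type*} [Group G] (L : Subgroup G) [L.Normal]
    {x : G} (hx : x ∈ commutator G) :
    ((x, x) : G × G) ∈ ⁅relProd L, relProd L⁆ := by
  have h : commutator G ≤ Subgroup.comap
      ((MonoidHom.id G).prod (MonoidHom.id G)) ⁅relProd L, relProd L⁆ := by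
    rw [commutator_def, Subgroup.commutator_le]
    intro g _ h' _
    rw [Subgroup.mem_comap]
    have h1 : ((g, g) : G × G) ∈ relProd L := mem_relProd.mpr (by simpa using L.one_mem)
    have h2 : ((h', h') : G × G) ∈ relProd L := mem_relProd.mpr (by simpa using L.one_mem)
    have := Subgroup.commutator_mem_commutator h1 h2
    have heq : ⁅((g, g) : G × G), ((h', h') : G × G)⁆ = ((⁅g, h'⁆, ⁅g, h'⁆) : G × G) := by
      simp [commutatorElement_def, Prod.ext_iff]
    rw [heq] at this
    exact this
  simpa using h hx

theorem relProd_abelianization {G : Type*} [Group G] (L : Subgroup G) [L.Normal] :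
    ∃ φ : G × L →* (↥(relProd L) ⧸ commutator ↥(relProd L)),
      (∀ (a : G) (b : L), φ (a, b) =
        QuotientGroup.mk (⟨(a, (b : G) * a), mem_relProd.mpr
          (by simp [mul_inv_rev, mul_inv_cancel_left])⟩ :
            ↥(relProd L))) ∧
      Function.Surjective φ ∧
      φ.ker = (commutator G).prod ((⁅(⊤ : Subgroup G), L⁆).subgroupOf L) ∧
      Nonempty (((G ⧸ commutator G) × (↥L ⧸ (⁅(⊤ : Subgroup G), L⁆).subgroupOf L)) ≃*
        (↥(relProd L) ⧸ commutator ↥(relProd L))) := by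
  classical
  -- the underlying (non-homomorphic) map into `relProd L`
  set e : G × L → ↥(relProd L) := fun p =>
    ⟨(p.1, (p.2 : G) * p.1), mem_relProd.mpr (by simp [mul_inv_rev, mul_inv_cancel_left])⟩
    with he
  have hmul : ∀ p q : G × ↥L,
      (QuotientGroup.mk (e (p * q)) :
        ↥(relProd L) ⧸ commutator ↥(relProd L)) =
      QuotientGroup.mk (e p) * QuotientGroup.mk (e q) := by
    intro ⟨a, b⟩ ⟨a', b'⟩
    rw [← QuotientGroup.mk_mul, QuotientGroup.eq, mem_commutator_relProd_iff]
    have hval : (((e (⟨a, b⟩ * ⟨a', b'⟩))⁻¹ * (e ⟨a, b⟩ * e ⟨a', b'⟩) : ↥(relProd L)) : G × G)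
        = (((1 : G), a'⁻¹ * ⁅a⁻¹, (b' : G)⁻¹⁆ * a') : G × G) := by
      refine Prod.ext ?_ ?_
      · show (a * a')⁻¹ * (a * a') = 1
        group
      · show ((b : G) * (b' : G) * (a * a'))⁻¹ * ((b : G) * a * ((b' : G) * a'))
          = a'⁻¹ * ⁅a⁻¹, (b' : G)⁻¹⁆ * a'
        rw [commutatorElement_def]
        group
    rw [hval]
    refine one_mem_relProd_commutator L ?_
    have hmemc : ⁅a⁻¹, (b' : G)⁻¹⁆ ∈ ⁅(⊤ : Subgroup G), L⁆ :=
      Subgroup.commutator_mem_commutator (Subgroup.mem_top _) (L.inv_mem b'.2)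
    have := (Subgroup.commutator_normal (⊤ : Subgroup G) L).conj_mem _ hmemc a'⁻¹
    simpa using this
  set φ : G × ↥L →* (↥(relProd L) ⧸ commutator ↥(relProd L)) :=
    { toFun := fun p => QuotientGroup.mk (e p)
      map_one' := by
        show (QuotientGroup.mk (e 1) : _) = 1
        have : e 1 = 1 := by
          apply Subtype.ext
          simp [he, Prod.ext_iff]
        rw [this, QuotientGroup.mk_one]
      map_mul' := hmul } with hφdef
  have hsurj : Function.Surjective φ := by
    intro x
    obtain ⟨⟨⟨a₁, a₂⟩, h⟩, rfl⟩ := QuotientGroup.mk_surjective x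
    have hmem : a₂ * a₁⁻¹ ∈ L := by simpa [mul_inv_rev] using L.inv_mem h
    refine ⟨(a₁, ⟨a₂ * a₁⁻¹, hmem⟩), ?_⟩
    show (QuotientGroup.mk (e (a₁, ⟨a₂ * a₁⁻¹, hmem⟩)) : _) = _
    congr 1
    apply Subtype.ext
    simp [he, Prod.ext_iff]
  have hker : φ.ker = (commutator G).prod ((⁅(⊤ : Subgroup G), L⁆).subgroupOf L) := by
    ext ⟨a, b⟩
    rw [MonoidHom.mem_ker, Subgroup.mem_prod]
    show (QuotientGroup.mk (e (a, b)) : _) = 1 ↔ _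
    rw [QuotientGroup.eq_one_iff]
    constructor
    · intro hk
      -- first projection hom
      set q1 : ↥(relProd L) →* G ⧸ commutator G :=
        (QuotientGroup.mk' (commutator G)).comp
          ((MonoidHom.fst G G).comp (relProd L).subtype) with hq1def
      have hq1 : commutator ↥(relProd L) ≤ q1.ker := by
        rw [commutator_def, Subgroup.commutator_le]
        intro x _ y _
        rw [MonoidHom.mem_ker, map_commutatorElement,
          commutatorElement_eq_one_iff_mul_comm]
        show (QuotientGroup.mk _ : G ⧸ commutator G) * QuotientGroup.mk _
          = QuotientGroup.mk _ * QuotientGroup.mk _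
        rw [← QuotientGroup.mk_mul, ← QuotientGroup.mk_mul, QuotientGroup.eq]
        show ((x : G × G).1 * (y : G × G).1)⁻¹ * ((y : G × G).1 * (x : G × G).1)
            ∈ commutator G
        have : ((x : G × G).1 * (y : G × G).1)⁻¹ * ((y : G × G).1 * (x : G × G).1)
            = ⁅(y : G × G).1⁻¹, (x : G × G).1⁻¹⁆ := by group
        rw [this]
        exact Subgroup.commutator_mem_commutator (Subgroup.mem_top _) (Subgroup.mem_top _)
      -- second hom measuring the `L`-discrepancy
      set q2 : ↥(relProd L) →* G ⧸ ⁅(⊤ : Subgroup G), L⁆ :=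
        { toFun := fun x => QuotientGroup.mk ((x : G × G).1 * (x : G × G).2⁻¹)
          map_one' := by simp
          map_mul' := by
            rintro ⟨⟨a₁, a₂⟩, ha⟩ ⟨⟨b₁, b₂⟩, hb⟩
            show (QuotientGroup.mk (a₁ * b₁ * (a₂ * b₂)⁻¹) : G ⧸ ⁅(⊤ : Subgroup G), L⁆)
              = QuotientGroup.mk (a₁ * a₂⁻¹) * QuotientGroup.mk (b₁ * b₂⁻¹)
            rw [← QuotientGroup.mk_mul, QuotientGroup.eq]
            have hd : b₂ * b₁⁻¹ ∈ L := by simpa [mul_inv_rev] using L.inv_mem hb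
            have : (a₁ * b₁ * (a₂ * b₂)⁻¹)⁻¹ * (a₁ * a₂⁻¹ * (b₁ * b₂⁻¹))
                = ⁅a₂, b₂ * b₁⁻¹⁆ := by group
            rw [this]
            exact Subgroup.commutator_mem_commutator (Subgroup.mem_top _) hd } with hq2def
      have hq2 : commutator ↥(relProd L) ≤ q2.ker := by
        rw [commutator_def, Subgroup.commutator_le]
        intro x _ y _
        rw [MonoidHom.mem_ker, map_commutatorElement,
          commutatorElement_eq_one_iff_mul_comm]
        show (QuotientGroup.mk _ : G ⧸ ⁅(⊤ : Subgroup G), L⁆) * QuotientGroup.mk _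
          = QuotientGroup.mk _ * QuotientGroup.mk _
        rw [← QuotientGroup.mk_mul, ← QuotientGroup.mk_mul, QuotientGroup.eq]
        show ((x : G × G).1 * (x : G × G).2⁻¹ * ((y : G × G).1 * (y : G × G).2⁻¹))⁻¹
            * ((y : G × G).1 * (y : G × G).2⁻¹ * ((x : G × G).1 * (x : G × G).2⁻¹))
            ∈ ⁅(⊤ : Subgroup G), L⁆
        have heq : ((x : G × G).1 * (x : G × G).2⁻¹ * ((y : G × G).1 * (y : G × G).2⁻¹))⁻¹
            * ((y : G × G).1 * (y : G × G).2⁻¹ * ((x : G × G).1 * (x : G × G).2⁻¹))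
            = ⁅((y : G × G).1 * (y : G × G).2⁻¹)⁻¹, ((x : G × G).1 * (x : G × G).2⁻¹)⁻¹⁆ := by
          group
        rw [heq]
        exact Subgroup.commutator_mem_commutator (Subgroup.mem_top _)
          (L.inv_mem x.2)
      constructor
      · have := hq1 hk
        rw [MonoidHom.mem_ker] at this
        have h1 : (QuotientGroup.mk a : G ⧸ commutator G) = 1 := this
        rwa [QuotientGroup.eq_one_iff] at h1
      · have := hq2 hk
        rw [MonoidHom.mem_ker] at this
        have h2 : (QuotientGroup.mk (a * ((b : G) * a)⁻¹) : G ⧸ ⁅(⊤ : Subgroup G), L⁆) = 1 :=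
          this
        rw [QuotientGroup.eq_one_iff] at h2
        have hb : (b : G) ∈ ⁅(⊤ : Subgroup G), L⁆ := by
          have : a * ((b : G) * a)⁻¹ = (b : G)⁻¹ := by group
          rw [this] at h2
          simpa using (⁅(⊤ : Subgroup G), L⁆).inv_mem h2
        rwa [Subgroup.mem_subgroupOf]
    · rintro ⟨ha, hb⟩
      rw [Subgroup.mem_subgroupOf] at hb
      rw [mem_commutator_relProd_iff]
      have : ((e (a, b) : G × G)) = (((1 : G), (b : G)) : G × G) * ((a, a) : G × G) := by
        simp [he, Prod.ext_iff]
      rw [this]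
      exact mul_mem (one_mem_relProd_commutator L hb) (diag_mem_relProd_commutator L ha)
  refine ⟨φ, fun a b => rfl, hsurj, hker, ?_⟩
  set ψ : G × ↥L →* (G ⧸ commutator G) × (↥L ⧸ (⁅(⊤ : Subgroup G), L⁆).subgroupOf L) :=
    (QuotientGroup.mk' (commutator G)).prodMap
      (QuotientGroup.mk' ((⁅(⊤ : Subgroup G), L⁆).subgroupOf L)) with hψ
  have hψsurj : Function.Surjective ψ := by
    rw [hψ, MonoidHom.coe_prodMap]
    exact Function.Surjective.prodMap (QuotientGroup.mk'_surjective _)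
      (QuotientGroup.mk'_surjective _)
  have hkerψ : ψ.ker = (commutator G).prod ((⁅(⊤ : Subgroup G), L⁆).subgroupOf L) := by
    rw [hψ, MonoidHom.ker_prodMap, QuotientGroup.ker_mk', QuotientGroup.ker_mk']
  exact ⟨(QuotientGroup.quotientKerEquivOfSurjective ψ hψsurj).symm.trans
    ((QuotientGroup.quotientMulEquivOfEq (hkerψ.trans hker.symm)).trans
      (QuotientGroup.quotientKerEquivOfSurjective φ hsurj))⟩
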